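/- Let X be a compact or discrete abelian group with Haar measures on X and its dual X̂ normalized so that Plancherel holds. For any ψ ∈ L²(X) with ‖ψ‖₂ = 1, the product of the Haar measures of the supports of ψ and of its Fourier transform ψ̂ satisfies α(supp ψ) · α̂(supp ψ̂) ≥ 1. Moreover the bound is attained (by normalized characters if X is compact and normalized delta functions if X is discrete). -/

import Mathlib

open MeasureTheory

noncomputable instance {X : Type*} [Monoid X] [TopologicalSpace X] :
    MeasurableSpace (PontryaginDual X) := borel _

instance {X : Type*} [Monoid X] [TopologicalSpace X] :
    BorelSpace (PontryaginDual X) := ⟨rfl⟩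

/-- The Fourier transform of an integrable function on an abelian group:
`f̂(γ) = ∫ f(x) γ(x)⁻¹ dμ(x)`. -/
noncomputable def fourierTransform {X : Type*} [CommGroup X] [TopologicalSpace X]
    [MeasurableSpace X] (μ : Measure X) (f : X → ℂ) : PontryaginDual X → ℂ :=
  fun γ => ∫ x, f x * ((γ x)⁻¹ : ℂ) ∂μ

section Auxiliary

open ENNReal NNReal

lemma SUP.circ_nnnorm (z : Circle) : ‖(z : ℂ)‖₊ = 1 := by
  ext
  simp [Circle.norm_coe]

lemma SUP.helper1 (c : ℝ≥0∞) (h0 : c ≠ 0) (ht : c ≠ ⊤) :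
    (‖(((Real.sqrt c.toReal)⁻¹ : ℝ) : ℂ)‖₊ : ℝ≥0∞) * c ^ (1/(2:ℝ)) = 1 := by
  have htr : 0 < c.toReal := ENNReal.toReal_pos h0 ht
  have hs : 0 < Real.sqrt c.toReal := Real.sqrt_pos.2 htr
  have h1 : (‖(((Real.sqrt c.toReal)⁻¹ : ℝ) : ℂ)‖₊ : ℝ≥0∞)
      = (ENNReal.ofReal (Real.sqrt c.toReal))⁻¹ := by
    rw [Complex.nnnorm_real, ← ENNReal.ofReal_inv_of_pos hs,
      ← Real.enorm_eq_ofReal (by positivity), enorm_eq_nnnorm]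
  have h2 : ENNReal.ofReal (Real.sqrt c.toReal) = c ^ (1/(2:ℝ)) := by
    rw [Real.sqrt_eq_rpow, ← ENNReal.ofReal_rpow_of_pos htr, ENNReal.ofReal_toReal ht]
  rw [h1, h2]
  exact ENNReal.inv_mul_cancel
    (ENNReal.rpow_pos (zero_lt_iff.mpr h0) ht).ne'
    (ENNReal.rpow_ne_top_of_nonneg (by norm_num) ht)

lemma SUP.sqrt_ennnorm (r : ℝ) :
    (‖((Real.sqrt r : ℝ) : ℂ)‖₊ : ℝ≥0∞) = ENNReal.ofReal (Real.sqrt r) := by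
  rw [Complex.nnnorm_real, ← Real.enorm_eq_ofReal (Real.sqrt_nonneg _), enorm_eq_nnnorm]

lemma SUP.helper2 (c m : ℝ≥0∞) (ht : c ≠ ⊤)
    (h : (‖((Real.sqrt c.toReal : ℝ) : ℂ)‖₊ : ℝ≥0∞) * m ^ (1/(2:ℝ)) = 1) :
    c * m = 1 := by
  have := congrArg (fun x : ℝ≥0∞ => x ^ (2:ℝ)) h
  simp only [ENNReal.mul_rpow_of_nonneg _ _ (by norm_num : (0:ℝ) ≤ 2), ENNReal.one_rpow] at this
  rw [SUP.sqrt_ennnorm,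
    ENNReal.ofReal_rpow_of_nonneg (Real.sqrt_nonneg _) (by norm_num),
    show ((2:ℝ)) = ((2:ℕ):ℝ) by norm_num, Real.rpow_natCast,
    Real.sq_sqrt ENNReal.toReal_nonneg,
    ENNReal.ofReal_toReal ht, ← ENNReal.rpow_mul] at this
  norm_num at this
  exact this

/-- Cauchy–Schwarz: the L¹ norm is bounded by `μ(supp)^{1/2}` times the L² norm. -/
lemma SUP.CS_support {X : Type*} [MeasurableSpace X] (α : Measure X) (ψ : X → ℂ)
    (h : AEStronglyMeasurable ψ α) :
    ∫⁻ x, (‖ψ x‖₊ : ℝ≥0∞) ∂α ≤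
      α (Function.support ψ) ^ (1/(2:ℝ)) * (∫⁻ x, (‖ψ x‖₊ : ℝ≥0∞) ^ (2:ℝ) ∂α) ^ (1/(2:ℝ)) := by
  set ψ' := h.mk ψ with hψ'
  have hae : ψ =ᵐ[α] ψ' := h.ae_eq_mk
  have hm : Measurable ψ' := h.stronglyMeasurable_mk.measurable
  have hS : MeasurableSet (Function.support ψ') := by
    rw [Function.support_eq_preimage]
    exact hm (measurableSet_singleton 0).compl
  have hSS : α (Function.support ψ) = α (Function.support ψ') := by
    apply measure_congr
    filter_upwards [hae] with x hx
    show (ψ x ≠ 0) = (ψ' x ≠ 0)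
    rw [hx]
  have hI : ∫⁻ x, (‖ψ x‖₊ : ℝ≥0∞) ∂α = ∫⁻ x, (‖ψ' x‖₊ : ℝ≥0∞) ∂α :=
    lintegral_congr_ae (hae.mono fun x hx => by simp only [hx])
  have hI2 : ∫⁻ x, (‖ψ x‖₊ : ℝ≥0∞) ^ (2:ℝ) ∂α = ∫⁻ x, (‖ψ' x‖₊ : ℝ≥0∞) ^ (2:ℝ) ∂α :=
    lintegral_congr_ae (hae.mono fun x hx => by simp only [hx])
  rw [hSS, hI, hI2]
  have key : ∫⁻ x, (‖ψ' x‖₊ : ℝ≥0∞) ∂α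
      = ∫⁻ x, ((Function.support ψ').indicator (fun _ => (1:ℝ≥0∞)) x) * (‖ψ' x‖₊ : ℝ≥0∞) ∂α := by
    apply lintegral_congr
    intro x
    by_cases hx : ψ' x = 0
    · simp [hx]
    · rw [Set.indicator_of_mem (Function.mem_support.2 hx), one_mul]
  rw [key]
  have hH := ENNReal.lintegral_mul_le_Lp_mul_Lq α (Real.HolderConjugate.conjExponent one_lt_two)
    ((measurable_const.indicator hS).aemeasurable :
      AEMeasurable ((Function.support ψ').indicator (fun _ => (1:ℝ≥0∞))) α)
    hm.enorm.aemeasurable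
  refine le_trans hH ?_
  have hconj : Real.conjExponent 2 = 2 := by
    rw [Real.conjExponent]; norm_num
  rw [hconj]
  gcongr
  · have : ∀ x, ((Function.support ψ').indicator (fun _ => (1:ℝ≥0∞)) x) ^ (2:ℝ)
        = (Function.support ψ').indicator (fun _ => (1:ℝ≥0∞)) x := by
      intro x
      by_cases hx : x ∈ Function.support ψ'
      · simp [Set.indicator_of_mem hx]
      · simp [Set.indicator_of_notMem hx, ENNReal.zero_rpow_of_pos]
    rw [lintegral_congr this, lintegral_indicator hS]
    simp
  · exact le_rfl

/-- If the L² norm of `f` is `1` then so is the integral of `‖f‖₊ ^ 2`. -/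
lemma SUP.sq_lintegral_one {Y : Type*} [MeasurableSpace Y] (μ : Measure Y) (f : Y → ℂ)
    (h : eLpNorm f 2 μ = 1) : ∫⁻ x, (‖f x‖₊ : ℝ≥0∞) ^ (2:ℝ) ∂μ = 1 := by
  rw [eLpNorm_eq_lintegral_rpow_enorm_toReal (by norm_num) (by norm_num)] at h
  simp only [ENNReal.toReal_ofNat] at h
  have := congrArg (fun x : ℝ≥0∞ => x ^ (2:ℝ)) h
  simp only [← ENNReal.rpow_mul, ENNReal.one_rpow] at this
  rw [show (1/(2:ℝ))*2 = 1 by norm_num, ENNReal.rpow_one] at this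
  exact this

/-- Orthogonality: a nontrivial character integrates to zero against Haar measure. -/
lemma SUP.char_integral_zero {X : Type*} [CommGroup X] [TopologicalSpace X] [IsTopologicalGroup X]
    [MeasurableSpace X] [BorelSpace X] (α : Measure X) [α.IsHaarMeasure]
    (γ : PontryaginDual X) (hγ : γ ≠ 1) :
    ∫ x, ((γ x)⁻¹ : ℂ) ∂α = 0 := by
  obtain ⟨a, ha⟩ := DFunLike.ne_iff.1 hγ
  have ha' : ((γ a : ℂ))⁻¹ ≠ 1 := by
    simp only [ne_eq, inv_eq_one]
    simpa [Circle.coe_eq_one] using ha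
  have key : ∫ x, ((γ x)⁻¹ : ℂ) ∂α = ((γ a : ℂ))⁻¹ * ∫ x, ((γ x)⁻¹ : ℂ) ∂α := by
    conv_lhs => rw [← integral_mul_left_eq_self (fun x => (((γ x) : ℂ))⁻¹) a]
    rw [← integral_const_mul]
    congr 1
    funext x
    rw [map_mul]
    push_cast
    rw [mul_inv]
  have h2 : (((γ a : ℂ))⁻¹ - 1) * ∫ x, ((γ x)⁻¹ : ℂ) ∂α = 0 := by
    rw [sub_mul, one_mul, ← key, sub_self]
  rcases mul_eq_zero.1 h2 with h | h
  · exact absurd (sub_eq_zero.1 h) ha'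
  · exact h

end Auxiliary

open ENNReal NNReal in

/-- Support uncertainty principle for a compact or discrete abelian group with Haar
measures normalized so that Plancherel holds: for unit `ψ ∈ L²(X)`, the product of the
Haar measures of the supports of `ψ` and of `ψ̂` is at least `1`, and the bound is
attained. -/
theorem support_uncertainty_principle
    {X : Type*} [CommGroup X] [TopologicalSpace X] [IsTopologicalGroup X]
    [MeasurableSpace X] [BorelSpace X]
    (hX : CompactSpace X ∨ DiscreteTopology X)
    (α : Measure X) [α.IsHaarMeasure]
    (ν : Measure (PontryaginDual X)) [ν.IsHaarMeasure]
    (hPlancherel : ∀ g : X → ℂ, Integrable g α → MemLp g 2 α →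
      eLpNorm (fourierTransform α g) 2 ν = eLpNorm g 2 α) :
    (∀ ψ : X → ℂ, Integrable ψ α → eLpNorm ψ 2 α = 1 →
      1 ≤ α (Function.support ψ) * ν (Function.support (fourierTransform α ψ))) ∧
    (∃ ψ : X → ℂ, Integrable ψ α ∧ eLpNorm ψ 2 α = 1 ∧
      α (Function.support ψ) * ν (Function.support (fourierTransform α ψ)) = 1) := by
  constructor
  · -- the uncertainty inequality
    intro ψ hInt hψ2
    set F := fourierTransform α ψ with hFdef
    set S := Function.support ψ
    have hmem : MemLp ψ 2 α := ⟨hInt.aestronglyMeasurable, by rw [hψ2]; exact ENNReal.one_lt_top⟩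
    have hPl : eLpNorm F 2 ν = 1 := (hPlancherel ψ hInt hmem).trans hψ2
    have hLψ : ∫⁻ x, (‖ψ x‖₊ : ℝ≥0∞) ^ (2:ℝ) ∂α = 1 := SUP.sq_lintegral_one α ψ hψ2
    have hLF : ∫⁻ γ, (‖F γ‖₊ : ℝ≥0∞) ^ (2:ℝ) ∂ν = 1 := SUP.sq_lintegral_one ν F hPl
    have hCS : ∫⁻ x, (‖ψ x‖₊ : ℝ≥0∞) ∂α ≤ α S ^ (1/(2:ℝ)) := by
      have := SUP.CS_support α ψ hInt.aestronglyMeasurable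
      rwa [hLψ, ENNReal.one_rpow, mul_one] at this
    have hpt : ∀ γ, (‖F γ‖₊ : ℝ≥0∞) ^ (2:ℝ) ≤
        (Function.support F).indicator (fun _ => α S) γ := by
      intro γ
      by_cases hγ : F γ = 0
      · simp [hγ, ENNReal.zero_rpow_of_pos]
      · rw [Set.indicator_of_mem (Function.mem_support.2 hγ)]
        have h1 : (‖F γ‖₊ : ℝ≥0∞) ≤ ∫⁻ x, (‖ψ x‖₊ : ℝ≥0∞) ∂α := by
          have h2 := enorm_integral_le_lintegral_enorm (μ := α)
            (fun x => ψ x * ((γ x)⁻¹ : ℂ))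
          calc (‖F γ‖₊ : ℝ≥0∞) ≤ ∫⁻ x, (‖ψ x * ((γ x)⁻¹ : ℂ)‖₊ : ℝ≥0∞) ∂α := h2
            _ = ∫⁻ x, (‖ψ x‖₊ : ℝ≥0∞) ∂α := by
                apply lintegral_congr
                intro x
                rw [nnnorm_mul, nnnorm_inv, SUP.circ_nnnorm, inv_one, mul_one]
        calc (‖F γ‖₊ : ℝ≥0∞) ^ (2:ℝ) ≤ (α S ^ (1/(2:ℝ))) ^ (2:ℝ) :=
              ENNReal.rpow_le_rpow (h1.trans hCS) (by norm_num)
          _ = α S := by rw [← ENNReal.rpow_mul]; norm_num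
    calc (1:ℝ≥0∞) = ∫⁻ γ, (‖F γ‖₊ : ℝ≥0∞) ^ (2:ℝ) ∂ν := hLF.symm
      _ ≤ ∫⁻ γ, (Function.support F).indicator (fun _ => α S) γ ∂ν := lintegral_mono hpt
      _ ≤ α S * ν (Function.support F) := lintegral_indicator_const_le _ _
  · -- sharpness
    rcases hX with hc | hd
    · -- compact case: a normalized constant function
      haveI : IsFiniteMeasure α := ⟨isCompact_univ.measure_lt_top⟩
      have hfin : α Set.univ ≠ ⊤ := measure_ne_top α _
      have h0 : α Set.univ ≠ 0 := isOpen_univ.measure_ne_zero α Set.univ_nonempty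
      set t : ℝ := (α Set.univ).toReal with htdef
      have htpos : 0 < t := ENNReal.toReal_pos h0 hfin
      set k : ℝ := (Real.sqrt t)⁻¹ with hkdef
      have hkpos : 0 < k := by positivity
      refine ⟨fun _ => (k : ℂ), integrable_const _, ?_, ?_⟩
      · rw [eLpNorm_const _ (by norm_num) (by simpa using (Measure.measure_univ_ne_zero.1 h0)),
          ENNReal.toReal_ofNat]
        exact SUP.helper1 (α Set.univ) h0 hfin
      · have hF : fourierTransform α (fun _ => (k : ℂ))
            = Set.indicator {(1 : PontryaginDual X)} (fun _ => ((Real.sqrt t : ℝ) : ℂ)) := by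
          funext γ
          show ∫ x, (k : ℂ) * ((γ x)⁻¹ : ℂ) ∂α = _
          by_cases hγ : γ = 1
          · subst hγ
            rw [Set.indicator_of_mem (Set.mem_singleton _)]
            have : ∀ x : X, (k : ℂ) * (((1 : PontryaginDual X) x : ℂ))⁻¹ = (k : ℂ) := by
              intro x
              rw [show ((1 : PontryaginDual X) x) = 1 from rfl, Circle.coe_one, inv_one, mul_one]
            rw [integral_congr_ae (Filter.Eventually.of_forall this), integral_const,
              Complex.real_smul]
            norm_cast
            rw [hkdef, ← div_eq_mul_inv, show α.real Set.univ = t from rfl, Real.div_sqrt]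
          · rw [Set.indicator_of_notMem (by simpa using hγ), integral_const_mul,
              SUP.char_integral_zero α γ hγ, mul_zero]
        rw [hF]
        have hsk : ((Real.sqrt t : ℝ) : ℂ) ≠ 0 := by
          simp [Real.sqrt_ne_zero'.2 htpos]
        have hsupp1 : Function.support (fun _ : X => (k : ℂ)) = Set.univ :=
          Function.support_const (by simp [hkpos.ne'])
        have hsupp2 : Function.support
            (Set.indicator {(1 : PontryaginDual X)} (fun _ => ((Real.sqrt t : ℝ) : ℂ)))
            = {(1 : PontryaginDual X)} := by
          rw [Set.support_indicator]
          simp [Function.support_const hsk]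
        rw [hsupp1, hsupp2]
        have hPl := hPlancherel (fun _ => (k : ℂ)) (integrable_const _)
          (memLp_const _)
        rw [hF] at hPl
        rw [eLpNorm_indicator_const (measurableSet_singleton _) (by norm_num) (by norm_num)] at hPl
        rw [eLpNorm_const _ (by norm_num) (by simpa using (Measure.measure_univ_ne_zero.1 h0)),
          ENNReal.toReal_ofNat] at hPl
        have h1 : (‖((Real.sqrt t : ℝ) : ℂ)‖₊ : ℝ≥0∞) * ν {1} ^ (1/(2:ℝ)) = 1 := by
          rw [← enorm_eq_nnnorm, hPl]
          exact SUP.helper1 (α Set.univ) h0 hfin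
        exact SUP.helper2 _ _ hfin h1
    · -- discrete case: a normalized delta function
      haveI : MeasurableSingletonClass X := ⟨fun a => isClosed_singleton.measurableSet⟩
      have hms : MeasurableSet ({(1:X)} : Set X) := measurableSet_singleton _
      have hfin : α {(1:X)} ≠ ⊤ := isCompact_singleton.measure_lt_top.ne
      have h0 : α {(1:X)} ≠ 0 := (isOpen_discrete _).measure_ne_zero α ⟨1, rfl⟩
      have hν0 : ν ≠ 0 := by
        rw [← Measure.measure_univ_ne_zero]
        exact isOpen_univ.measure_ne_zero ν Set.univ_nonempty
      set t : ℝ := (α {(1:X)}).toReal with htdef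
      have htpos : 0 < t := ENNReal.toReal_pos h0 hfin
      set k : ℝ := (Real.sqrt t)⁻¹ with hkdef
      have hkpos : 0 < k := by positivity
      set ψ : X → ℂ := Set.indicator {(1:X)} (fun _ => (k : ℂ)) with hψdef
      have hIntψ : Integrable ψ α := by
        rw [hψdef, integrable_indicator_iff hms]
        exact integrableOn_const hfin
      have hNorm : eLpNorm ψ 2 α = 1 := by
        rw [hψdef, eLpNorm_indicator_const hms (by norm_num) (by norm_num), ENNReal.toReal_ofNat]
        exact SUP.helper1 (α {(1:X)}) h0 hfin
      refine ⟨ψ, hIntψ, hNorm, ?_⟩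
      have hF : fourierTransform α ψ = fun _ : PontryaginDual X => ((Real.sqrt t : ℝ) : ℂ) := by
        funext γ
        show ∫ x, ψ x * ((γ x)⁻¹ : ℂ) ∂α = _
        have hpt : ∀ x, ψ x * ((γ x)⁻¹ : ℂ)
            = Set.indicator {(1:X)} (fun y => (k : ℂ) * ((γ y)⁻¹ : ℂ)) x := by
          intro x
          by_cases hx : x ∈ ({(1:X)} : Set X)
          · rw [hψdef, Set.indicator_of_mem hx, Set.indicator_of_mem hx]
          · rw [hψdef, Set.indicator_of_notMem hx, Set.indicator_of_notMem hx, zero_mul]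
        rw [integral_congr_ae (Filter.Eventually.of_forall hpt), integral_indicator hms,
          Measure.restrict_singleton, integral_smul_measure, integral_dirac,
          show ((γ (1:X)) : ℂ) = 1 by rw [map_one, Circle.coe_one], inv_one, mul_one,
          Complex.real_smul, ← htdef]
        norm_cast
        rw [hkdef, ← div_eq_mul_inv, Real.div_sqrt]
      rw [hF]
      have hsupp1 : Function.support ψ = {(1:X)} := by
        rw [hψdef, Set.support_indicator]
        simp [Function.support_const (show (k:ℂ) ≠ 0 by simp [hkpos.ne'])]
      have hsupp2 : Function.support (fun _ : PontryaginDual X => ((Real.sqrt t : ℝ) : ℂ))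
          = Set.univ :=
        Function.support_const (by simp [Real.sqrt_ne_zero'.2 htpos])
      rw [hsupp1, hsupp2]
      have hPl := hPlancherel ψ hIntψ
        ⟨hIntψ.aestronglyMeasurable, by rw [hNorm]; exact ENNReal.one_lt_top⟩
      rw [hF, hNorm, eLpNorm_const _ (by norm_num) hν0, ENNReal.toReal_ofNat] at hPl
      exact SUP.helper2 _ _ hfin hPl
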